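/- Fix real numbers XP > 0 and XR > 0. The function μ ↦ F^(μ)(XP,XR) = XP^(2(1−μ)) · XR^(2μ) / ((1−μ)·XP + μ·XR) is convex on the interval [0,1]. -/

import Mathlib

open Real Set

/-- exp of a convex function is convex. -/
lemma convexOn_exp_comp {s : Set ℝ} {f : ℝ → ℝ} (hf : ConvexOn ℝ s f) :
    ConvexOn ℝ s (fun x => Real.exp (f x)) :=
  ⟨hf.1, fun x hx y hy a b ha hb hab =>
    le_trans (Real.exp_le_exp.mpr (hf.2 hx hy ha hb hab))
      (convexOn_exp.2 (Set.mem_univ _) (Set.mem_univ _) ha hb hab)⟩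

lemma affine_convexOn (c d : ℝ) {s : Set ℝ} (hs : Convex ℝ s) :
    ConvexOn ℝ s (fun μ : ℝ => c + d * μ) :=
  ⟨hs, fun x _ y _ a b _ _ hab => le_of_eq (by
    simp only [smul_eq_mul]
    linear_combination (-c) * hab)⟩

/-- The biased Extended F-score
`F^(μ)(XP,XR) = XP^(2(1−μ)) · XR^(2μ) / ((1−μ)·XP + μ·XR)`. -/
noncomputable def Fext (μ XP XR : ℝ) : ℝ :=
  XP ^ (2 * (1 - μ)) * XR ^ (2 * μ) / ((1 - μ) * XP + μ * XR)

/-- For fixed `XP, XR > 0`, the map `μ ↦ F^(μ)(XP,XR)` is convex on `[0,1]`. -/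
theorem Fext_convexOn (XP XR : ℝ) (hXP : 0 < XP) (hXR : 0 < XR) :
    ConvexOn ℝ (Set.Icc (0 : ℝ) 1) (fun μ => Fext μ XP XR) := by
  set L : ℝ → ℝ := fun μ => (1 - μ) * XP + μ * XR with hL
  have hLpos : ∀ μ ∈ Icc (0:ℝ) 1, 0 < L μ := by
    intro μ hμ
    obtain ⟨h0, h1⟩ := hμ
    have h1' : 0 ≤ 1 - μ := by linarith
    have : 0 < (1 - μ) * XP + μ * XR := by
      rcases lt_or_eq_of_le h0 with h | h
      · nlinarith [mul_pos h hXR, mul_nonneg h1' hXP.le]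
      · rw [← h]; nlinarith
    exact this
  -- the exponent
  set h : ℝ → ℝ := fun μ => (2 * Real.log XP + (2 * Real.log XR - 2 * Real.log XP) * μ)
      - Real.log (L μ) with hh
  have hconv1 : ConvexOn ℝ (Icc (0:ℝ) 1)
      (fun μ : ℝ => 2 * Real.log XP + (2 * Real.log XR - 2 * Real.log XP) * μ) :=
    affine_convexOn _ _ (convex_Icc 0 1)
  have hconv2 : ConvexOn ℝ (Icc (0:ℝ) 1) (fun μ => - Real.log (L μ)) := by
    refine ⟨convex_Icc 0 1, fun x hx y hy a b ha hb hab => ?_⟩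
    have hLx := hLpos x hx
    have hLy := hLpos y hy
    have hlog := (strictConcaveOn_log_Ioi.concaveOn).2 (mem_Ioi.mpr hLx) (mem_Ioi.mpr hLy)
      ha hb hab
    have hEq : L (a • x + b • y) = a • L x + b • L y := by
      simp only [hL, smul_eq_mul]
      nlinarith [hab]
    simp only []
    rw [hEq]
    simp only [smul_eq_mul] at hlog ⊢
    nlinarith [hlog]
  have hconvh : ConvexOn ℝ (Icc (0:ℝ) 1) h := by
    have := hconv1.add hconv2
    exact this.congr fun μ _ => by simp only [hh, Pi.add_apply]; ring
  have := convexOn_exp_comp hconvh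
  refine this.congr fun μ hμ => ?_
  have hLμ := hLpos μ hμ
  simp only [hh]
  rw [Real.exp_sub, Real.exp_log hLμ]
  unfold Fext
  rw [Real.rpow_def_of_pos hXP, Real.rpow_def_of_pos hXR, ← Real.exp_add]
  simp only [hL]
  ring_nf
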